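/- In a two-terminal series-parallel graph G, for any edge tolls τ ∈ ℝ≥0^E there exist canonical tolls α ∈ ℝ≥0^E such that (i) τ(P) = α(P) for every s-t path P, and (ii) for every subgraph H of the decomposition tree and every edge e = (s_H, v) ∈ E(H) leaving the source terminal of H, α_e ≥ min over s_H-t_H paths P in H of α(P). -/

import Mathlib

/-- Two-terminal series-parallel graphs, given by their binary decomposition tree. -/
inductive SPG : Type
  | edge : SPG
  | series : SPG → SPG → SPG
  | parallel : SPG → SPG → SPG

namespace SPG

/-- The edge set of a series-parallel graph (the leaves of the decomposition tree). -/
def E : SPG → Type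
  | .edge => Unit
  | .series a b => a.E ⊕ b.E
  | .parallel a b => a.E ⊕ b.E

/-- The `s`-`t` paths of a series-parallel graph. -/
def Path : SPG → Type
  | .edge => Unit
  | .series a b => a.Path × b.Path
  | .parallel a b => a.Path ⊕ b.Path

/-- The cost `c(P) = Σ_{e ∈ P} c_e` of a path under edge costs `c`. -/
def pathCost : (G : SPG) → (G.E → ℝ) → G.Path → ℝ
  | .edge, c, _ => c ()
  | .series a b, c, P => a.pathCost (c ∘ Sum.inl) P.1 + b.pathCost (c ∘ Sum.inr) P.2
  | .parallel a _, c, .inl P => a.pathCost (c ∘ Sum.inl) P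
  | .parallel _ b, c, .inr P => b.pathCost (c ∘ Sum.inr) P

/-- The minimum of `c(P)` over all `s`-`t` paths `P` of `G`. -/
def minPathCost : (G : SPG) → (G.E → ℝ) → ℝ
  | .edge, c => c ()
  | .series a b, c => a.minPathCost (c ∘ Sum.inl) + b.minPathCost (c ∘ Sum.inr)
  | .parallel a b, c => min (a.minPathCost (c ∘ Sum.inl)) (b.minPathCost (c ∘ Sum.inr))

/-- `e` is an edge leaving the source terminal of `G`. -/
def isSourceEdge : (G : SPG) → G.E → Prop
  | .edge, _ => True
  | .series a _, e => match e with
      | .inl e => a.isSourceEdge e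
      | .inr _ => False
  | .parallel a b, e => match e with
      | .inl e => a.isSourceEdge e
      | .inr e => b.isSourceEdge e

/-- Canonical tolls: for every subgraph `H` of the decomposition tree and every edge
`e` leaving the source terminal `s_H` of `H`, `α_e ≥ min_{P ∈ 𝒫(H)} α(P)`. -/
def Canonical : (G : SPG) → (G.E → ℝ) → Prop
  | .edge, _ => True
  | .series a b, τ =>
      (∀ e, a.isSourceEdge e →
        a.minPathCost (τ ∘ Sum.inl) + b.minPathCost (τ ∘ Sum.inr) ≤ τ (Sum.inl e)) ∧
      a.Canonical (τ ∘ Sum.inl) ∧ b.Canonical (τ ∘ Sum.inr)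
  | .parallel a b, τ =>
      (∀ e, a.isSourceEdge e →
        min (a.minPathCost (τ ∘ Sum.inl)) (b.minPathCost (τ ∘ Sum.inr)) ≤ τ (Sum.inl e)) ∧
      (∀ e, b.isSourceEdge e →
        min (a.minPathCost (τ ∘ Sum.inl)) (b.minPathCost (τ ∘ Sum.inr)) ≤ τ (Sum.inr e)) ∧
      a.Canonical (τ ∘ Sum.inl) ∧ b.Canonical (τ ∘ Sum.inr)

/-- Add `δ` to the toll of every source edge. -/
def addToSource : (G : SPG) → ℝ → (G.E → ℝ) → G.E → ℝ
  | .edge, δ, c, _ => c () + δ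
  | .series a _, δ, c, .inl e => a.addToSource δ (c ∘ Sum.inl) e
  | .series _ _, _, c, .inr e => c (Sum.inr e)
  | .parallel a _, δ, c, .inl e => a.addToSource δ (c ∘ Sum.inl) e
  | .parallel _ b, δ, c, .inr e => b.addToSource δ (c ∘ Sum.inr) e

lemma addToSource_series_inl (a b : SPG) (δ : ℝ) (c : (SPG.series a b).E → ℝ) :
    (SPG.series a b).addToSource δ c ∘ Sum.inl = a.addToSource δ (c ∘ Sum.inl) := rfl

lemma addToSource_series_inr (a b : SPG) (δ : ℝ) (c : (SPG.series a b).E → ℝ) :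
    (SPG.series a b).addToSource δ c ∘ Sum.inr = c ∘ Sum.inr := rfl

lemma addToSource_parallel_inl (a b : SPG) (δ : ℝ) (c : (SPG.parallel a b).E → ℝ) :
    (SPG.parallel a b).addToSource δ c ∘ Sum.inl = a.addToSource δ (c ∘ Sum.inl) := rfl

lemma addToSource_parallel_inr (a b : SPG) (δ : ℝ) (c : (SPG.parallel a b).E → ℝ) :
    (SPG.parallel a b).addToSource δ c ∘ Sum.inr = b.addToSource δ (c ∘ Sum.inr) := rfl

lemma addToSource_cases : ∀ (G : SPG) (δ : ℝ) (c : G.E → ℝ) (e : G.E),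
    G.addToSource δ c e = c e ∨ (G.isSourceEdge e ∧ G.addToSource δ c e = c e + δ)
  | .edge, δ, c, e => Or.inr ⟨trivial, rfl⟩
  | .series a b, δ, c, .inl e => by
      rcases addToSource_cases a δ (c ∘ Sum.inl) e with h | ⟨hs, h⟩
      · exact Or.inl h
      · exact Or.inr ⟨hs, h⟩
  | .series a b, δ, c, .inr e => Or.inl rfl
  | .parallel a b, δ, c, .inl e => by
      rcases addToSource_cases a δ (c ∘ Sum.inl) e with h | ⟨hs, h⟩
      · exact Or.inl h
      · exact Or.inr ⟨hs, h⟩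
  | .parallel a b, δ, c, .inr e => by
      rcases addToSource_cases b δ (c ∘ Sum.inr) e with h | ⟨hs, h⟩
      · exact Or.inl h
      · exact Or.inr ⟨hs, h⟩

lemma addToSource_source : ∀ (G : SPG) (δ : ℝ) (c : G.E → ℝ) (e : G.E),
    G.isSourceEdge e → G.addToSource δ c e = c e + δ
  | .edge, δ, c, e, _ => rfl
  | .series a b, δ, c, .inl e, hs => addToSource_source a δ (c ∘ Sum.inl) e hs
  | .series a b, δ, c, .inr e, hs => absurd hs (by simp [isSourceEdge])
  | .parallel a b, δ, c, .inl e, hs => addToSource_source a δ (c ∘ Sum.inl) e hs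
  | .parallel a b, δ, c, .inr e, hs => addToSource_source b δ (c ∘ Sum.inr) e hs

lemma pathCost_addToSource : ∀ (G : SPG) (δ : ℝ) (c : G.E → ℝ) (P : G.Path),
    G.pathCost (G.addToSource δ c) P = G.pathCost c P + δ
  | .edge, δ, c, P => rfl
  | .series a b, δ, c, P => by
      simp only [pathCost, addToSource_series_inl, addToSource_series_inr,
        pathCost_addToSource a δ (c ∘ Sum.inl) P.1]
      ring
  | .parallel a b, δ, c, .inl P => by
      simpa only [pathCost, addToSource_parallel_inl] using
        pathCost_addToSource a δ (c ∘ Sum.inl) P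
  | .parallel a b, δ, c, .inr P => by
      simpa only [pathCost, addToSource_parallel_inr] using
        pathCost_addToSource b δ (c ∘ Sum.inr) P

lemma minPathCost_addToSource : ∀ (G : SPG) (δ : ℝ) (c : G.E → ℝ),
    G.minPathCost (G.addToSource δ c) = G.minPathCost c + δ
  | .edge, δ, c => rfl
  | .series a b, δ, c => by
      simp only [minPathCost, addToSource_series_inl, addToSource_series_inr,
        minPathCost_addToSource a δ (c ∘ Sum.inl)]
      ring
  | .parallel a b, δ, c => by
      simp only [minPathCost, addToSource_parallel_inl, addToSource_parallel_inr,
        minPathCost_addToSource a δ (c ∘ Sum.inl),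
        minPathCost_addToSource b δ (c ∘ Sum.inr)]
      exact min_add_add_right (a.minPathCost (c ∘ Sum.inl)) (b.minPathCost (c ∘ Sum.inr)) δ

lemma minPathCost_nonneg : ∀ (G : SPG) (c : G.E → ℝ), (∀ e, 0 ≤ c e) → 0 ≤ G.minPathCost c
  | .edge, c, h => h ()
  | .series a b, c, h =>
      add_nonneg (minPathCost_nonneg a _ fun e => h (Sum.inl e))
        (minPathCost_nonneg b _ fun e => h (Sum.inr e))
  | .parallel a b, c, h =>
      le_min (minPathCost_nonneg a _ fun e => h (Sum.inl e))
        (minPathCost_nonneg b _ fun e => h (Sum.inr e))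

lemma canonical_addToSource : ∀ (G : SPG) (δ : ℝ) (c : G.E → ℝ),
    G.Canonical c → G.Canonical (G.addToSource δ c)
  | .edge, δ, c, _ => trivial
  | .series a b, δ, c, ⟨hsrc, hca, hcb⟩ => by
      refine ⟨?_, ?_, ?_⟩
      · intro e he
        have := hsrc e he
        simp only [addToSource_series_inl, addToSource_series_inr,
          minPathCost_addToSource]
        have heq : (SPG.series a b).addToSource δ c (Sum.inl e)
            = a.addToSource δ (c ∘ Sum.inl) e := rfl
        rw [heq, addToSource_source a δ (c ∘ Sum.inl) e he]
        simp only [Function.comp] at this ⊢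
        linarith
      · rw [addToSource_series_inl]
        exact canonical_addToSource a δ (c ∘ Sum.inl) hca
      · rw [addToSource_series_inr]
        exact hcb
  | .parallel a b, δ, c, ⟨hsa, hsb, hca, hcb⟩ => by
      refine ⟨?_, ?_, ?_, ?_⟩
      · intro e he
        have := hsa e he
        simp only [addToSource_parallel_inl, addToSource_parallel_inr,
          minPathCost_addToSource]
        have heq : (SPG.parallel a b).addToSource δ c (Sum.inl e)
            = a.addToSource δ (c ∘ Sum.inl) e := rfl
        rw [heq, addToSource_source a δ (c ∘ Sum.inl) e he, min_add_add_right]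
        simp only [Function.comp] at this ⊢
        linarith
      · intro e he
        have := hsb e he
        simp only [addToSource_parallel_inl, addToSource_parallel_inr,
          minPathCost_addToSource]
        have heq : (SPG.parallel a b).addToSource δ c (Sum.inr e)
            = b.addToSource δ (c ∘ Sum.inr) e := rfl
        rw [heq, addToSource_source b δ (c ∘ Sum.inr) e he, min_add_add_right]
        simp only [Function.comp] at this ⊢
        linarith
      · rw [addToSource_parallel_inl]
        exact canonical_addToSource a δ (c ∘ Sum.inl) hca
      · rw [addToSource_parallel_inr]
        exact canonical_addToSource b δ (c ∘ Sum.inr) hcb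

/-- Strengthened induction: also the top-level source edges dominate the min path cost. -/
theorem canonical_strong : ∀ (G : SPG) (τ : G.E → ℝ), (∀ e, 0 ≤ τ e) →
    ∃ α : G.E → ℝ, (∀ e, 0 ≤ α e) ∧
      (∀ P : G.Path, G.pathCost α P = G.pathCost τ P) ∧
      G.Canonical α ∧
      (∀ e, G.isSourceEdge e → G.minPathCost α ≤ α e)
  | .edge, τ, hτ =>
      ⟨τ, hτ, fun _ => rfl, trivial, fun e _ => le_of_eq (congrArg τ rfl)⟩
  | .series a b, τ, hτ => by
      obtain ⟨α₁, h1n, h1p, h1c, h1s⟩ :=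
        canonical_strong a (τ ∘ Sum.inl) fun e => hτ (Sum.inl e)
      obtain ⟨α₂, h2n, h2p, h2c, h2s⟩ :=
        canonical_strong b (τ ∘ Sum.inr) fun e => hτ (Sum.inr e)
      set δ := b.minPathCost α₂ with hδ
      have hδ0 : 0 ≤ δ := minPathCost_nonneg b α₂ h2n
      refine ⟨Sum.elim (a.addToSource δ α₁) (b.addToSource (-δ) α₂), ?_, ?_, ?_, ?_⟩
      · rintro (e | e)
        · rcases addToSource_cases a δ α₁ e with h | ⟨_, h⟩
          · simpa [h] using h1n e
          · simp only [Sum.elim_inl, h]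
            linarith [h1n e]
        · rcases addToSource_cases b (-δ) α₂ e with h | ⟨hs, h⟩
          · simpa [h] using h2n e
          · simp only [Sum.elim_inr, h]
            linarith [h2s e hs]
      · intro P
        have hl : Sum.elim (a.addToSource δ α₁) (b.addToSource (-δ) α₂) ∘ Sum.inl
            = a.addToSource δ α₁ := rfl
        have hr : Sum.elim (a.addToSource δ α₁) (b.addToSource (-δ) α₂) ∘ Sum.inr
            = b.addToSource (-δ) α₂ := rfl
        show a.pathCost (a.addToSource δ α₁) P.1 + b.pathCost (b.addToSource (-δ) α₂) P.2 = _
        simp only [pathCost, hl, hr, pathCost_addToSource, h1p, h2p]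
        ring
      · refine ⟨?_, ?_, ?_⟩
        · intro e he
          have hl : Sum.elim (a.addToSource δ α₁) (b.addToSource (-δ) α₂) ∘ Sum.inl
              = a.addToSource δ α₁ := rfl
          have hr : Sum.elim (a.addToSource δ α₁) (b.addToSource (-δ) α₂) ∘ Sum.inr
              = b.addToSource (-δ) α₂ := rfl
          change a.minPathCost (a.addToSource δ α₁) + b.minPathCost (b.addToSource (-δ) α₂)
            ≤ a.addToSource δ α₁ e
          simp only [minPathCost_addToSource, Sum.elim_inl,
            addToSource_source a δ α₁ e he]
          have := h1s e he
          linarith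
        · exact canonical_addToSource a δ α₁ h1c
        · exact canonical_addToSource b (-δ) α₂ h2c
      · rintro (e | e) he
        · have hl : Sum.elim (a.addToSource δ α₁) (b.addToSource (-δ) α₂) ∘ Sum.inl
              = a.addToSource δ α₁ := rfl
          have hr : Sum.elim (a.addToSource δ α₁) (b.addToSource (-δ) α₂) ∘ Sum.inr
              = b.addToSource (-δ) α₂ := rfl
          change a.minPathCost (a.addToSource δ α₁) + b.minPathCost (b.addToSource (-δ) α₂)
            ≤ a.addToSource δ α₁ e
          simp only [minPathCost, hl, hr, minPathCost_addToSource, Sum.elim_inl,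
            addToSource_source a δ α₁ e he]
          have := h1s e he
          linarith
        · exact absurd he (by simp [isSourceEdge])
  | .parallel a b, τ, hτ => by
      obtain ⟨α₁, h1n, h1p, h1c, h1s⟩ :=
        canonical_strong a (τ ∘ Sum.inl) fun e => hτ (Sum.inl e)
      obtain ⟨α₂, h2n, h2p, h2c, h2s⟩ :=
        canonical_strong b (τ ∘ Sum.inr) fun e => hτ (Sum.inr e)
      refine ⟨Sum.elim α₁ α₂, ?_, ?_, ?_, ?_⟩
      · rintro (e | e)
        · exact h1n e
        · exact h2n e
      · rintro (P | P)
        · exact h1p P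
        · exact h2p P
      · refine ⟨?_, ?_, ?_, ?_⟩
        · intro e he
          simp only [Sum.elim_comp_inl, Sum.elim_comp_inr, Sum.elim_inl]
          exact le_trans (min_le_left _ _) (h1s e he)
        · intro e he
          simp only [Sum.elim_comp_inl, Sum.elim_comp_inr, Sum.elim_inr]
          exact le_trans (min_le_right _ _) (h2s e he)
        · exact h1c
        · exact h2c
      · rintro (e | e) he
        · simp only [minPathCost, Sum.elim_comp_inl, Sum.elim_comp_inr, Sum.elim_inl]
          exact le_trans (min_le_left _ _) (h1s e he)
        · simp only [minPathCost, Sum.elim_comp_inl, Sum.elim_comp_inr, Sum.elim_inr]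
          exact le_trans (min_le_right _ _) (h2s e he)

end SPG

/-- Claim 4.2: any nonnegative edge tolls `τ` on a series-parallel graph can be
converted into nonnegative canonical tolls `α` with the same cost on every
`s`-`t` path. -/
theorem spg_canonical_tolls (G : SPG) (τ : G.E → ℝ) (hτ : ∀ e, 0 ≤ τ e) :
    ∃ α : G.E → ℝ, (∀ e, 0 ≤ α e) ∧
      (∀ P : G.Path, G.pathCost α P = G.pathCost τ P) ∧
      G.Canonical α := by
  obtain ⟨α, h1, h2, h3, _⟩ := SPG.canonical_strong G τ hτ
  exact ⟨α, h1, h2, h3⟩
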